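/- For every 1 ≤ i ≤ t+1, the i-th maximal minor of the spread-out matrix 𝓜 is a bihomogeneous element of k[𝐚][x,y] of bidegree (t+1−i, m_{i−1}) with respect to the ℤ²-grading. -/

import Mathlib

open MvPolynomial

noncomputable section

namespace Stmt3

variable (k : Type*) [Field k] (t : ℕ) (m : ℕ → ℕ)

/-- `D m j = d_{j+1} = m_{j+1} - m_j` (`0`-indexed version of the column degrees `d`). -/
def D (j : ℕ) : ℕ := m (j + 1) - m j

/-- The bound on the exponent index `k` of a parameter `a_{i,j,k}` sitting in (0-indexed) row
`i` and column `j`: it is `d_j` below the diagonal (`i > j`) and `d_i` on or above it. -/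
def bound (i j : ℕ) : ℕ := if j < i then D m j else D m i

/-- Index type for the parameters `𝐚 = (a_{i,j,k})` of the spread-out matrix: triples
(0-indexed) `(i, j, k)` with `i ≤ t`, `j < t` and `k < bound i j`. -/
def Idx : Type := {v : ℕ × ℕ × ℕ // v.1 ≤ t ∧ v.2.1 < t ∧ v.2.2 < bound m v.1 v.2.1}

/-- The ring `k[𝐚][x,y]`, realized as a polynomial ring in the variables `x, y`
(the two elements of `Fin 2`) and the `a_{i,j,k}` (the elements of `Idx t m`). -/
abbrev S : Type _ := MvPolynomial ((Fin 2) ⊕ (Idx t m)) k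

/-- The variable `x`. -/
def xv : S k t m := X (Sum.inl 0)

/-- The variable `y`. -/
def yv : S k t m := X (Sum.inl 1)

/-- The entry perturbation `a_{i,j} = Σ_k a_{i,j,k} y^k`. -/
def aij (i : Fin (t + 1)) (j : Fin t) : S k t m :=
  ∑ k' ∈ (Finset.range (bound m (i : ℕ) (j : ℕ))).attach,
    X (Sum.inr (⟨((i : ℕ), (j : ℕ), (k' : ℕ)),
        ⟨Nat.lt_succ_iff.mp i.isLt, j.isLt, Finset.mem_range.mp k'.2⟩⟩ : Idx t m))
      * yv k t m ^ (k' : ℕ)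

/-- The spread-out matrix `𝓜`: the Hilbert–Burch matrix `M_E` (with `y^{d_j}` on the diagonal
and `-x` below it) perturbed by the `a_{i,j}`. -/
def spreadMatrix : Matrix (Fin (t + 1)) (Fin t) (S k t m) :=
  fun i j =>
    (if (i : ℕ) = (j : ℕ) then yv k t m ^ D m (j : ℕ)
      else if (i : ℕ) = (j : ℕ) + 1 then -xv k t m else 0)
    + aij k t m i j

/-- The `ℤ²`-grading: `deg x = (1,0)`, `deg y = (0,1)` and
`deg a_{i,j,k} = (i - j, m_j - m_{i-1} - k)` (in the 0-indexed coordinates used here, the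
parameter stored as `(i', j', k)` has degree `(i' - j', m_{j'+1} - m_{i'} - k)`). -/
def wt : ((Fin 2) ⊕ (Idx t m)) → ℤ × ℤ :=
  Sum.elim (fun i => if i = 0 then ((1 : ℤ), (0 : ℤ)) else ((0 : ℤ), (1 : ℤ)))
    (fun v => ((v.1.1 : ℤ) - (v.1.2.1 : ℤ),
      (m (v.1.2.1 + 1) : ℤ) - (m v.1.1 : ℤ) - (v.1.2.2 : ℤ)))

/-- Powers of a weighted homogeneous polynomial are weighted homogeneous. -/
lemma whPow {σ R M : Type*} [CommSemiring R] [AddCommMonoid M] {w : σ → M}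
    {p : MvPolynomial σ R} {d : M} (h : IsWeightedHomogeneous w p d) (n : ℕ) :
    IsWeightedHomogeneous w (p ^ n) (n • d) := by
  induction n with
  | zero => simpa using isWeightedHomogeneous_one R w
  | succ n ih =>
      rw [pow_succ, succ_nsmul]
      exact ih.mul h

/-- Negation preserves weighted homogeneity. -/
lemma whNeg {σ R M : Type*} [CommRing R] [AddCommMonoid M] {w : σ → M}
    {p : MvPolynomial σ R} {d : M} (h : IsWeightedHomogeneous w p d) :
    IsWeightedHomogeneous w (-p) d := by
  intro e he
  apply h
  simpa using he

/-- Scaling by a unit of `ℤ` preserves weighted homogeneity. -/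
lemma whUnitsSmul {σ R M : Type*} [CommRing R] [AddCommMonoid M] {w : σ → M}
    {p : MvPolynomial σ R} {d : M} (u : ℤˣ) (h : IsWeightedHomogeneous w p d) :
    IsWeightedHomogeneous w (u • p) d := by
  rcases Int.units_eq_one_or u with h1 | h1 <;> subst h1
  · simpa using h
  · simpa using whNeg h

/-- Each entry of the spread-out matrix is bihomogeneous. -/
lemma entry_hom (hmono : ∀ i, i < t → m i ≤ m (i + 1)) (r : Fin (t + 1)) (c : Fin t) :
    IsWeightedHomogeneous (wt t m) (spreadMatrix k t m r c)
      (((r : ℕ) : ℤ) - ((c : ℕ) : ℤ), (m ((c : ℕ) + 1) : ℤ) - (m (r : ℕ) : ℤ)) := by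
  have hy : IsWeightedHomogeneous (wt t m) (yv k t m) ((0 : ℤ), (1 : ℤ)) := by
    simpa [wt, yv] using isWeightedHomogeneous_X k (wt t m) (Sum.inl 1)
  have hx : IsWeightedHomogeneous (wt t m) (xv k t m) ((1 : ℤ), (0 : ℤ)) := by
    simpa [wt, xv] using isWeightedHomogeneous_X k (wt t m) (Sum.inl 0)
  unfold spreadMatrix
  apply IsWeightedHomogeneous.add
  · split_ifs with h1 h2
    · -- diagonal : y ^ D m c
      have hD : ((D m (c : ℕ) : ℕ) : ℤ) = (m ((c : ℕ) + 1) : ℤ) - (m (c : ℕ) : ℤ) := by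
        have := hmono (c : ℕ) c.isLt
        simp [D, Nat.cast_sub this]
      have := whPow hy (D m (c : ℕ))
      have heq : ((D m (c : ℕ)) • ((0 : ℤ), (1 : ℤ)) : ℤ × ℤ)
          = (((r : ℕ) : ℤ) - ((c : ℕ) : ℤ), (m ((c : ℕ) + 1) : ℤ) - (m (r : ℕ) : ℤ)) := by
        rw [Prod.ext_iff]
        constructor
        · simp [h1]
        · simp only [Prod.smul_snd, smul_eq_mul, mul_one, Prod.snd]
          rw [show ((D m (c : ℕ)) • (1 : ℤ)) = ((D m (c : ℕ) : ℕ) : ℤ) by simp, hD, h1]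
      exact heq ▸ this
    · -- subdiagonal : -x
      have heq : ((1 : ℤ), (0 : ℤ))
          = (((r : ℕ) : ℤ) - ((c : ℕ) : ℤ), (m ((c : ℕ) + 1) : ℤ) - (m (r : ℕ) : ℤ)) := by
        rw [Prod.ext_iff]
        constructor
        · simp [h2]
        · simp [h2]
      exact heq ▸ whNeg hx
    · exact isWeightedHomogeneous_zero k (wt t m) _
  · -- the perturbation a_{r,c}
    apply IsWeightedHomogeneous.sum
    intro k' _
    have hXa := isWeightedHomogeneous_X k (wt t m)
      (Sum.inr (⟨((r : ℕ), (c : ℕ), (k' : ℕ)),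
        ⟨Nat.lt_succ_iff.mp r.isLt, c.isLt, Finset.mem_range.mp k'.2⟩⟩ : Idx t m))
    have := hXa.mul (whPow hy (k' : ℕ))
    have heq : ((wt t m) (Sum.inr (⟨((r : ℕ), (c : ℕ), (k' : ℕ)),
        ⟨Nat.lt_succ_iff.mp r.isLt, c.isLt, Finset.mem_range.mp k'.2⟩⟩ : Idx t m))
          + (k' : ℕ) • ((0 : ℤ), (1 : ℤ)) : ℤ × ℤ)
        = (((r : ℕ) : ℤ) - ((c : ℕ) : ℤ), (m ((c : ℕ) + 1) : ℤ) - (m (r : ℕ) : ℤ)) := by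
      rw [Prod.ext_iff]
      constructor
      · simp [wt]
        rfl
      · simp [wt]
        change ((m ((c : ℕ) + 1) : ℤ) - (m (r : ℕ) : ℤ) - ((k' : ℕ) : ℤ)) + ((k' : ℕ) : ℤ) = _
        ring
    exact heq ▸ this

/-- The key degree bookkeeping: for any permutation `σ` of the columns, the total degree of the
corresponding monomial in the determinant expansion is `(t - i, m_i)`. -/
lemma keysum (hm0 : m 0 = 0) (i : Fin (t + 1)) (σ : Equiv.Perm (Fin t)) :
    ∑ c : Fin t,
        ((((i.succAbove (σ c) : ℕ)) : ℤ) - ((c : ℕ) : ℤ),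
          (m ((c : ℕ) + 1) : ℤ) - (m ((i.succAbove (σ c) : ℕ)) : ℤ))
      = ((t : ℤ) - (i : ℕ), (m (i : ℕ) : ℤ)) := by
  have hperm1 : ∑ c : Fin t, (((i.succAbove (σ c) : ℕ)) : ℤ)
      = ∑ c : Fin t, (((i.succAbove c : ℕ)) : ℤ) :=
    Equiv.sum_comp σ (fun r => (((i.succAbove r : ℕ)) : ℤ))
  have hperm2 : ∑ c : Fin t, ((m ((i.succAbove (σ c) : ℕ))) : ℤ)
      = ∑ c : Fin t, ((m ((i.succAbove c : ℕ))) : ℤ) :=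
    Equiv.sum_comp σ (fun r => ((m ((i.succAbove r : ℕ))) : ℤ))
  have hsA : ∑ r : Fin (t + 1), ((r : ℕ) : ℤ)
      = ((i : ℕ) : ℤ) + ∑ c : Fin t, (((i.succAbove c : ℕ)) : ℤ) :=
    Fin.sum_univ_succAbove (fun r : Fin (t + 1) => ((r : ℕ) : ℤ)) i
  have hsB : ∑ r : Fin (t + 1), ((m (r : ℕ)) : ℤ)
      = ((m (i : ℕ)) : ℤ) + ∑ c : Fin t, ((m ((i.succAbove c : ℕ))) : ℤ) :=
    Fin.sum_univ_succAbove (fun r : Fin (t + 1) => ((m (r : ℕ)) : ℤ)) i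
  have hsC : ∑ r : Fin (t + 1), ((r : ℕ) : ℤ)
      = (∑ c : Fin t, ((c : ℕ) : ℤ)) + (t : ℤ) := by
    rw [Fin.sum_univ_castSucc (fun r : Fin (t + 1) => ((r : ℕ) : ℤ))]
    simp
  have hsD : ∑ r : Fin (t + 1), ((m (r : ℕ)) : ℤ)
      = ((m 0 : ℕ) : ℤ) + ∑ c : Fin t, ((m ((c : ℕ) + 1)) : ℤ) := by
    rw [Fin.sum_univ_succ (fun r : Fin (t + 1) => ((m (r : ℕ)) : ℤ))]
    simp
  rw [Prod.ext_iff]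
  constructor
  · rw [Prod.fst_sum]
    simp only [Finset.sum_sub_distrib]
    rw [hperm1]
    omega
  · rw [Prod.snd_sum]
    simp only [Finset.sum_sub_distrib]
    rw [hperm2]
    rw [hm0] at hsD
    omega

/-- Each maximal minor of the spread-out matrix `𝓜` (deleting the 0-indexed
row `i`, i.e. the 1-indexed row `i+1`) is bihomogeneous of bidegree `(t - i, m_i)` for the
`ℤ²`-grading of `k[𝐚][x,y]`. -/
theorem stmt3 (ht : 1 ≤ t) (hm0 : m 0 = 0) (hmono : ∀ i, i < t → m i ≤ m (i + 1)) :
    ∀ i : Fin (t + 1),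
      IsWeightedHomogeneous (wt t m)
        (((spreadMatrix k t m).submatrix i.succAbove id).det)
        ((t : ℤ) - (i : ℕ), (m (i : ℕ) : ℤ)) := by
  intro i
  rw [Matrix.det_apply]
  apply IsWeightedHomogeneous.sum
  intro σ _
  apply whUnitsSmul
  have := IsWeightedHomogeneous.prod Finset.univ
    (fun c => ((spreadMatrix k t m).submatrix i.succAbove id) (σ c) c)
    (fun c => ((((i.succAbove (σ c) : ℕ)) : ℤ) - ((c : ℕ) : ℤ),
      (m ((c : ℕ) + 1) : ℤ) - (m ((i.succAbove (σ c) : ℕ)) : ℤ)))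
    (fun c _ => entry_hom k t m hmono (i.succAbove (σ c)) c)
  rwa [keysum t m hm0 i σ] at this

end Stmt3
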